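/- arXiv:1104.0403 — 3 statements merged into one kernel-verified Lean document; each statement's English description precedes it below -/
import Mathlib

section
/- Let q ∈ ℂ be nonzero and not a root of unity. Then for every integer n ≥ 3, the figure-eight multisum J satisfies the second-order inhomogeneous q-difference equation: J(n) = q^{−1−n}(q + q^n)(q^{2n} − q)/(q^n − 1) − [(1 − q^{n−2})(1 − q^{2n−1}) / ((1 − q^n)(1 − q^{2n−3}))] · J(n−2) + [q^{−2−2n}(1 − q^{n−1})²(1 + q^{n−1})(q⁴ + q^{4n} − q^{3+n} − q^{1+2n} − q^{3+2n} − q^{1+3n}) / ((1 − q^n)(1 − q^{2n−3}))] · J(n−1). -/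
noncomputable def Ff (q : ℂ) (m k : ℕ) : ℂ :=
  ∏ j ∈ Finset.range k, (q ^ m + (q ^ m)⁻¹ - q ^ (j + 1) - (q ^ (j + 1))⁻¹)

lemma Ff_zero (q : ℂ) (m : ℕ) : Ff q m 0 = 1 := by simp [Ff]

lemma Ff_succ (q : ℂ) (m k : ℕ) :
    Ff q m (k + 1) = Ff q m k * (q ^ m + (q ^ m)⁻¹ - q ^ (k + 1) - (q ^ (k + 1))⁻¹) :=
  Finset.prod_range_succ _ _

lemma Ff_eq_zero (q : ℂ) {m k : ℕ} (hm : 1 ≤ m) (hk : m ≤ k) : Ff q m k = 0 := by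
  apply Finset.prod_eq_zero (i := m - 1) (by simp [Finset.mem_range]; omega)
  have h : m - 1 + 1 = m := by omega
  rw [h]; ring

lemma L1 (q : ℂ) (hq : q ≠ 0) (m k : ℕ) :
    q ^ ((m : ℤ) * (k : ℤ)) *
      (∏ i ∈ Finset.range k, (1 - q ^ (-(m : ℤ) - 1 - (i : ℤ)))) *
      (∏ i ∈ Finset.range k, (1 - q ^ ((1 : ℤ) - (m : ℤ) + (i : ℤ)))) = Ff q m k := by
  induction k with
  | zero => simp [Ff]
  | succ k ih =>
    rw [Finset.prod_range_succ, Finset.prod_range_succ, Ff_succ]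
    rw [show ((k + 1 : ℕ) : ℤ) = (k : ℤ) + 1 by push_cast; ring]
    rw [show (m : ℤ) * ((k : ℤ) + 1) = (m : ℤ) * (k : ℤ) + (m : ℤ) by ring]
    rw [zpow_add₀ hq]
    have e1 : q ^ (-(m : ℤ) - 1 - (k : ℤ)) = (q ^ m)⁻¹ * q⁻¹ * (q ^ k)⁻¹ := by
      rw [show -(m : ℤ) - 1 - (k : ℤ) = -(m : ℤ) + (-1) + (-(k : ℤ)) by ring,
        zpow_add₀ hq, zpow_add₀ hq, zpow_neg, zpow_neg, zpow_neg, zpow_natCast,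
        zpow_natCast, zpow_one]
    have e2 : q ^ ((1 : ℤ) - (m : ℤ) + (k : ℤ)) = q * (q ^ m)⁻¹ * q ^ k := by
      rw [show (1 : ℤ) - (m : ℤ) + (k : ℤ) = 1 + (-(m : ℤ)) + (k : ℤ) by ring,
        zpow_add₀ hq, zpow_add₀ hq, zpow_neg, zpow_natCast, zpow_natCast, zpow_one]
    have e3 : q ^ (m : ℤ) = q ^ m := zpow_natCast q m
    rw [e1, e2, e3, ← ih]
    have hqm : (q : ℂ) ^ m ≠ 0 := pow_ne_zero _ hq
    have hqk : (q : ℂ) ^ k ≠ 0 := pow_ne_zero _ hq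
    field_simp
    ring

lemma L2 (q : ℂ) (hq : q ≠ 0) (hqru : ∀ k : ℕ, 0 < k → q ^ k ≠ 1)
    (m : ℕ) (hm : 1 ≤ m) (k : ℕ) :
    (1 - q ^ (m + 1) * q ^ k) * (1 - q ^ m) * Ff q m k =
      (1 - q ^ (m + 1)) * (q ^ k - q ^ m) * Ff q (m + 1) k := by
  induction k with
  | zero => simp [Ff]
  | succ k ih =>
    have h1 : (1 : ℂ) - q ^ (m + 1) * q ^ k ≠ 0 := by
      rw [← pow_add]; exact sub_ne_zero_of_ne (fun h => hqru _ (by omega) h.symm)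
    have h2 : (1 : ℂ) - q ^ m ≠ 0 :=
      sub_ne_zero_of_ne (fun h => hqru _ (by omega) h.symm)
    have hFm : Ff q m k =
        (1 - q ^ (m + 1)) * (q ^ k - q ^ m) * Ff q (m + 1) k /
          ((1 - q ^ (m + 1) * q ^ k) * (1 - q ^ m)) := by
      rw [eq_div_iff (mul_ne_zero h1 h2)]
      linear_combination ih
    rw [Ff_succ, Ff_succ, hFm]
    have hqm : (q : ℂ) ^ m ≠ 0 := pow_ne_zero _ hq
    have hqm1 : (q : ℂ) ^ (m + 1) ≠ 0 := pow_ne_zero _ hq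
    have hqk : (q : ℂ) ^ k ≠ 0 := pow_ne_zero _ hq
    have hqk1 : (q : ℂ) ^ (k + 1) ≠ 0 := pow_ne_zero _ hq
    field_simp
    ring

noncomputable def Gg (q : ℂ) (a k : ℕ) : ℂ :=
  (q ^ (a + 3) - 1) * (q ^ 2 - q ^ (2 * a + 6)) * (q - q ^ (2 * a + 6)) *
      (q ^ 3 - q ^ (2 * a + 6)) * q ^ k * Ff q (a + 3) k /
    (q ^ 4 * q ^ (a + 3) * (q ^ (a + 3) * q ^ k - 1) * (q ^ (a + 3) * q ^ k - q))

set_option maxHeartbeats 4000000 in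
lemma KeyTel (q : ℂ) (hq : q ≠ 0) (hqru : ∀ k : ℕ, 0 < k → q ^ k ≠ 1)
    (a k : ℕ) :
    (1 - q ^ (a + 3)) * (1 - q ^ (2 * a + 3)) * Ff q (a + 3) k
      + (1 - q ^ (a + 1)) * (1 - q ^ (2 * a + 5)) * Ff q (a + 1) k
      - (q ^ (2 * a + 8))⁻¹ * (1 - q ^ (a + 2)) ^ 2 * (1 + q ^ (a + 2)) *
          (q ^ 4 + q ^ (4 * a + 12) - q ^ (a + 6) - q ^ (2 * a + 7) -
            q ^ (2 * a + 9) - q ^ (3 * a + 10)) * Ff q (a + 2) k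
    = Gg q a (k + 1) - Gg q a k := by
  have ne1' : ∀ m : ℕ, 0 < m → q ^ m - (1 : ℂ) ≠ 0 := fun m hm =>
    sub_ne_zero_of_ne (fun h => hqru m hm h)
  have pk : ∀ m : ℕ, (q : ℂ) ^ m ≠ 0 := fun m => pow_ne_zero _ hq
  have d1 : (q : ℂ) ^ (a + 3) * q ^ k - 1 ≠ 0 := by rw [← pow_add]; exact ne1' _ (by omega)
  have d2 : (q : ℂ) ^ (a + 3) * q ^ k - q ≠ 0 := by
    have h : (q : ℂ) ^ (a + 3) * q ^ k - q = q * (q ^ (a + 2) * q ^ k - 1) := by ring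
    rw [h, ← pow_add]; exact mul_ne_zero hq (ne1' _ (by omega))
  have d3 : (q : ℂ) ^ (a + 3) * q ^ (k + 1) - 1 ≠ 0 := by rw [← pow_add]; exact ne1' _ (by omega)
  have d4 : (q : ℂ) ^ (a + 3) * q ^ (k + 1) - q ≠ 0 := by
    have h : (q : ℂ) ^ (a + 3) * q ^ (k + 1) - q = q * (q ^ (a + 2) * q ^ (k + 1) - 1) := by ring
    rw [h, ← pow_add]; exact mul_ne_zero hq (ne1' _ (by omega))
  have hDA : (q : ℂ) ^ 4 * q ^ (a + 3) * (q ^ (a + 3) * q ^ (k + 1) - 1) *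
      (q ^ (a + 3) * q ^ (k + 1) - q) ≠ 0 :=
    mul_ne_zero (mul_ne_zero (mul_ne_zero (pk 4) (pk _)) d3) d4
  have hDB : (q : ℂ) ^ 4 * q ^ (a + 3) * (q ^ (a + 3) * q ^ k - 1) *
      (q ^ (a + 3) * q ^ k - q) ≠ 0 :=
    mul_ne_zero (mul_ne_zero (mul_ne_zero (pk 4) (pk _)) d1) d2
  have hW : (q : ℂ) ^ (2 * a + 8) * (q ^ (a + 3) * q ^ (k + 1)) *
      ((q : ℂ) ^ 4 * q ^ (a + 3) * (q ^ (a + 3) * q ^ (k + 1) - 1) *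
        (q ^ (a + 3) * q ^ (k + 1) - q)) *
      ((q : ℂ) ^ 4 * q ^ (a + 3) * (q ^ (a + 3) * q ^ k - 1) *
        (q ^ (a + 3) * q ^ k - q)) ≠ 0 :=
    mul_ne_zero (mul_ne_zero (mul_ne_zero (pk _) (mul_ne_zero (pk _) (pk _))) hDA) hDB
  apply mul_left_cancel₀ hW
  have hGA : ((q : ℂ) ^ (2 * a + 8) * (q ^ (a + 3) * q ^ (k + 1)) *
      ((q : ℂ) ^ 4 * q ^ (a + 3) * (q ^ (a + 3) * q ^ (k + 1) - 1) *
        (q ^ (a + 3) * q ^ (k + 1) - q)) *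
      ((q : ℂ) ^ 4 * q ^ (a + 3) * (q ^ (a + 3) * q ^ k - 1) *
        (q ^ (a + 3) * q ^ k - q))) * Gg q a (k + 1) =
      q ^ (2 * a + 8) *
        ((q : ℂ) ^ 4 * q ^ (a + 3) * (q ^ (a + 3) * q ^ k - 1) * (q ^ (a + 3) * q ^ k - q)) *
        ((q ^ (a + 3) - 1) * (q ^ 2 - q ^ (2 * a + 6)) * (q - q ^ (2 * a + 6)) *
          (q ^ 3 - q ^ (2 * a + 6))) * q ^ (k + 1) *
        (q ^ (2 * a + 6) * q ^ (k + 1) + q ^ (k + 1) - q ^ (a + 3) * q ^ (2 * k + 2) -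
          q ^ (a + 3)) * Ff q (a + 3) k := by
    rw [Gg, Ff_succ, mul_div_assoc']
    rw [div_eq_iff hDA]
    field_simp
    ring
  have hGB : ((q : ℂ) ^ (2 * a + 8) * (q ^ (a + 3) * q ^ (k + 1)) *
      ((q : ℂ) ^ 4 * q ^ (a + 3) * (q ^ (a + 3) * q ^ (k + 1) - 1) *
        (q ^ (a + 3) * q ^ (k + 1) - q)) *
      ((q : ℂ) ^ 4 * q ^ (a + 3) * (q ^ (a + 3) * q ^ k - 1) *
        (q ^ (a + 3) * q ^ k - q))) * Gg q a k =
      q ^ (2 * a + 8) * (q ^ (a + 3) * q ^ (k + 1)) *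
        ((q : ℂ) ^ 4 * q ^ (a + 3) * (q ^ (a + 3) * q ^ (k + 1) - 1) *
          (q ^ (a + 3) * q ^ (k + 1) - q)) *
        ((q ^ (a + 3) - 1) * (q ^ 2 - q ^ (2 * a + 6)) * (q - q ^ (2 * a + 6)) *
          (q ^ 3 - q ^ (2 * a + 6))) * q ^ k * Ff q (a + 3) k := by
    rw [Gg, mul_div_assoc']
    rw [div_eq_iff hDB]
    ring
  conv_rhs => rw [mul_sub]
  rw [hGA, hGB]
  have hcan : (q : ℂ) ^ (2 * a + 8) * ((q : ℂ) ^ (2 * a + 8))⁻¹ = 1 :=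
    mul_inv_cancel₀ (pk _)
  linear_combination
    (((-1)*q^24*q^(3*a)*q^k + q^26*q^(4*a)*q^k + q^26*q^(4*a)*q^(2*k) + q^27*q^(4*a)*q^(2*k) + q^27*q^(5*a)*q^k + q^28*q^(4*a)*q^(2*k) + q^28*q^(5*a)*q^k + q^29*q^(5*a)*q^k + (-1)*q^29*q^(5*a)*q^(2*k) + (-1)*q^29*q^(5*a)*q^(3*k) + (-1)*q^29*q^(6*a)*q^k + (-1)*q^29*q^(6*a)*q^(2*k) + (-1)*q^30*q^(5*a)*q^(2*k) + (-1)*q^30*q^(5*a)*q^(3*k) + (-2)*q^30*q^(6*a)*q^(2*k) + (-1)*q^31*q^(5*a)*q^(3*k) + (-3)*q^31*q^(6*a)*q^(2*k) + (-1)*q^31*q^(7*a)*q^k + (-2)*q^32*q^(6*a)*q^(2*k) + (-1)*q^32*q^(7*a)*q^k + q^32*q^(7*a)*q^(2*k) + q^32*q^(7*a)*q^(3*k) + (-1)*q^33*q^(6*a)*q^(2*k) + q^33*q^(6*a)*q^(3*k) + q^33*q^(6*a)*q^(4*k) + (-1)*q^33*q^(7*a)*q^k + 2*q^33*q^(7*a)*q^(3*k)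 + q^33*q^(8*a)*q^(2*k) + 3*q^34*q^(7*a)*q^(3*k) + 2*q^34*q^(8*a)*q^(2*k) + 2*q^35*q^(7*a)*q^(3*k) + 3*q^35*q^(8*a)*q^(2*k) + q^36*q^(7*a)*q^(3*k) + 2*q^36*q^(8*a)*q^(2*k) + (-1)*q^36*q^(8*a)*q^(4*k) + q^36*q^(9*a)*q^k + q^36*q^(9*a)*q^(2*k) + (-1)*q^36*q^(9*a)*q^(3*k) + q^37*q^(8*a)*q^(2*k) + q^37*q^(8*a)*q^(3*k) + (-1)*q^37*q^(8*a)*q^(4*k) + (-2)*q^37*q^(9*a)*q^(3*k) + (-1)*q^38*q^(8*a)*q^(4*k) + (-3)*q^38*q^(9*a)*q^(3*k) + (-1)*q^38*q^(10*a)*q^(2*k) + (-2)*q^39*q^(9*a)*q^(3*k) + (-1)*q^39*q^(10*a)*q^(2*k) + (-1)*q^39*q^(10*a)*q^(3*k) + (-1)*q^40*q^(9*a)*q^(3*k) + (-1)*q^40*q^(9*a)*q^(4*k) + (-1)*q^40*q^(10*a)*q^(2*k) + (-1)*q^40*q^(10*a)*q^(3*k) + q^40*q^(10*a)*q^(4*k)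 + q^41*q^(10*a)*q^(4*k) + q^41*q^(11*a)*q^(3*k) + q^42*q^(10*a)*q^(4*k) + q^42*q^(11*a)*q^(3*k) + q^43*q^(11*a)*q^(3*k) + q^43*q^(11*a)*q^(4*k) + (-1)*q^45*q^(12*a)*q^(4*k))) * L2 q hq hqru (a + 2) (by omega) k
    + ((q^28*q^(5*a)*q^k + (-2)*q^31*q^(6*a)*q^(2*k) + (-1)*q^32*q^(6*a)*q^(2*k) + (-1)*q^33*q^(7*a)*q^k + q^34*q^(7*a)*q^(3*k) + 2*q^35*q^(7*a)*q^(3*k) + 2*q^36*q^(8*a)*q^(2*k) + q^37*q^(8*a)*q^(2*k) + (-1)*q^38*q^(8*a)*q^(4*k) + (-1)*q^39*q^(9*a)*q^(3*k) + (-2)*q^40*q^(9*a)*q^(3*k) + q^43*q^(10*a)*q^(4*k))) * L2 q hq hqru (a + 1) (by omega) k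
    + (-(q ^ (a + 3) * q ^ (k + 1) *
        ((q : ℂ) ^ 4 * q ^ (a + 3) * (q ^ (a + 3) * q ^ (k + 1) - 1) *
          (q ^ (a + 3) * q ^ (k + 1) - q)) *
        ((q : ℂ) ^ 4 * q ^ (a + 3) * (q ^ (a + 3) * q ^ k - 1) *
          (q ^ (a + 3) * q ^ k - q)) *
        ((1 - q ^ (a + 2)) ^ 2 * (1 + q ^ (a + 2)) *
          (q ^ 4 + q ^ (4 * a + 12) - q ^ (a + 6) - q ^ (2 * a + 7) -
            q ^ (2 * a + 9) - q ^ (3 * a + 10))) * Ff q (a + 2) k)) * hcan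

set_option maxHeartbeats 1000000 in
/-- The Habiro multisum `J n` for the colored Jones polynomial of the
figure-eight knot satisfies, for `q` nonzero and not a root of unity and
`n ≥ 3`, the second-order inhomogeneous q-difference equation produced by the
WZ algorithm. -/
theorem figure_eight_second_order_recursion (q : ℂ) (hq : q ≠ 0)
    (hqru : ∀ k : ℕ, 0 < k → q ^ k ≠ 1)
    (J : ℕ → ℂ)
    (hJ : ∀ n : ℕ, J n = ∑ k ∈ Finset.range n,
        q ^ ((n : ℤ) * (k : ℤ)) *
          (∏ i ∈ Finset.range k, (1 - q ^ (-(n : ℤ) - 1 - (i : ℤ)))) *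
          (∏ i ∈ Finset.range k, (1 - q ^ ((1 : ℤ) - (n : ℤ) + (i : ℤ)))))
    (n : ℕ) (hn : 3 ≤ n) :
    J n = q ^ (-1 - (n : ℤ)) * (q + q ^ (n : ℤ)) * (q ^ (2 * (n : ℤ)) - q) /
            (q ^ (n : ℤ) - 1)
      - (1 - q ^ ((n : ℤ) - 2)) * (1 - q ^ (2 * (n : ℤ) - 1)) /
          ((1 - q ^ (n : ℤ)) * (1 - q ^ (2 * (n : ℤ) - 3))) * J (n - 2)
      + q ^ (-2 - 2 * (n : ℤ)) * (1 - q ^ ((n : ℤ) - 1)) ^ 2 *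
          (1 + q ^ ((n : ℤ) - 1)) *
          (q ^ (4 : ℤ) + q ^ (4 * (n : ℤ)) - q ^ (3 + (n : ℤ)) -
            q ^ (1 + 2 * (n : ℤ)) - q ^ (3 + 2 * (n : ℤ)) - q ^ (1 + 3 * (n : ℤ))) /
          ((1 - q ^ (n : ℤ)) * (1 - q ^ (2 * (n : ℤ) - 3))) * J (n - 1) := by
  obtain ⟨a, rfl⟩ : ∃ a, n = a + 3 := ⟨n - 3, by omega⟩
  have pk : ∀ m : ℕ, (q : ℂ) ^ m ≠ 0 := fun m => pow_ne_zero _ hq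
  have ne1 : ∀ m : ℕ, 0 < m → (1 : ℂ) - q ^ m ≠ 0 := fun m hm =>
    sub_ne_zero_of_ne (fun h => hqru m hm h.symm)
  have ne1' : ∀ m : ℕ, 0 < m → q ^ m - (1 : ℂ) ≠ 0 := fun m hm =>
    sub_ne_zero_of_ne (fun h => hqru m hm h)
  have hJ3 : J (a + 3) = ∑ k ∈ Finset.range (a + 3), Ff q (a + 3) k := by
    rw [hJ]; exact Finset.sum_congr rfl fun k _ => L1 q hq (a + 3) k
  have hJ2 : J (a + 2) = ∑ k ∈ Finset.range (a + 3), Ff q (a + 2) k := by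
    have h1 : ∑ k ∈ Finset.range (a + 3), Ff q (a + 2) k
        = ∑ k ∈ Finset.range (a + 2), Ff q (a + 2) k := by
      rw [show a + 3 = (a + 2) + 1 from rfl, Finset.sum_range_succ,
        Ff_eq_zero q (m := a + 2) (by omega) le_rfl, add_zero]
    rw [hJ, h1]
    exact Finset.sum_congr rfl fun k _ => L1 q hq (a + 2) k
  have hJ1 : J (a + 1) = ∑ k ∈ Finset.range (a + 3), Ff q (a + 1) k := by
    have h1 : ∑ k ∈ Finset.range (a + 3), Ff q (a + 1) k
        = ∑ k ∈ Finset.range (a + 1), Ff q (a + 1) k := by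
      rw [show a + 3 = (a + 1) + 1 + 1 from rfl, Finset.sum_range_succ,
        Finset.sum_range_succ, Ff_eq_zero q (m := a + 1) (by omega) (by omega),
        Ff_eq_zero q (m := a + 1) (by omega) (by omega), add_zero, add_zero]
    rw [hJ, h1]
    exact Finset.sum_congr rfl fun k _ => L1 q hq (a + 1) k
  have tele : ∑ k ∈ Finset.range (a + 3),
      ((1 - q ^ (a + 3)) * (1 - q ^ (2 * a + 3)) * Ff q (a + 3) k
        + (1 - q ^ (a + 1)) * (1 - q ^ (2 * a + 5)) * Ff q (a + 1) k
        - (q ^ (2 * a + 8))⁻¹ * (1 - q ^ (a + 2)) ^ 2 * (1 + q ^ (a + 2)) *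
            (q ^ 4 + q ^ (4 * a + 12) - q ^ (a + 6) - q ^ (2 * a + 7) -
              q ^ (2 * a + 9) - q ^ (3 * a + 10)) * Ff q (a + 2) k)
      = Gg q a (a + 3) - Gg q a 0 := by
    rw [Finset.sum_congr rfl fun k _ => KeyTel q hq hqru a k]
    exact Finset.sum_range_sub (Gg q a) (a + 3)
  have hGn : Gg q a (a + 3) = 0 := by
    rw [Gg, Ff_eq_zero q (m := a + 3) (by omega) le_rfl]
    simp
  have e1 : (q : ℂ) ^ (a + 3) - 1 ≠ 0 := ne1' _ (by omega)
  have e2 : (q : ℂ) ^ (a + 3) - q ≠ 0 := by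
    have h : (q : ℂ) ^ (a + 3) - q = q * (q ^ (a + 2) - 1) := by ring
    rw [h]; exact mul_ne_zero hq (ne1' _ (by omega))
  have hG0 : Gg q a 0 =
      (q ^ (a + 4))⁻¹ * (q + q ^ (a + 3)) * (q ^ (2 * a + 6) - q) * (1 - q ^ (2 * a + 3)) := by
    rw [Gg, Ff_zero]
    rw [div_eq_iff (mul_ne_zero (mul_ne_zero (mul_ne_zero (pk 4) (pk (a + 3))) (by simpa using e1)) (by simpa using e2))]
    field_simp
    ring
  have main : (1 - q ^ (a + 3)) * (1 - q ^ (2 * a + 3)) * J (a + 3)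
      + (1 - q ^ (a + 1)) * (1 - q ^ (2 * a + 5)) * J (a + 1)
      - (q ^ (2 * a + 8))⁻¹ * (1 - q ^ (a + 2)) ^ 2 * (1 + q ^ (a + 2)) *
          (q ^ 4 + q ^ (4 * a + 12) - q ^ (a + 6) - q ^ (2 * a + 7) -
            q ^ (2 * a + 9) - q ^ (3 * a + 10)) * J (a + 2)
      = -(Gg q a 0) := by
    rw [hJ3, hJ2, hJ1, Finset.mul_sum, Finset.mul_sum, Finset.mul_sum,
      ← Finset.sum_add_distrib, ← Finset.sum_sub_distrib, tele, hGn]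
    ring
  have hsub2 : a + 3 - 2 = a + 1 := rfl
  have hsub1 : a + 3 - 1 = a + 2 := rfl
  rw [hsub2, hsub1]
  push_cast
  have z1 : q ^ (-1 - ((a : ℤ) + 3)) = (q ^ (a + 4))⁻¹ := by
    rw [show -1 - ((a : ℤ) + 3) = -((a + 4 : ℕ) : ℤ) by push_cast; ring, zpow_neg, zpow_natCast]
  have z2 : q ^ ((a : ℤ) + 3) = q ^ (a + 3) := by
    rw [show (a : ℤ) + 3 = ((a + 3 : ℕ) : ℤ) by push_cast; ring, zpow_natCast]
  have z3 : q ^ (2 * ((a : ℤ) + 3)) = q ^ (2 * a + 6) := by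
    rw [show 2 * ((a : ℤ) + 3) = ((2 * a + 6 : ℕ) : ℤ) by push_cast; ring, zpow_natCast]
  have z4 : q ^ ((a : ℤ) + 3 - 2) = q ^ (a + 1) := by
    rw [show (a : ℤ) + 3 - 2 = ((a + 1 : ℕ) : ℤ) by push_cast; ring, zpow_natCast]
  have z5 : q ^ (2 * ((a : ℤ) + 3) - 1) = q ^ (2 * a + 5) := by
    rw [show 2 * ((a : ℤ) + 3) - 1 = ((2 * a + 5 : ℕ) : ℤ) by push_cast; ring, zpow_natCast]
  have z6 : q ^ (2 * ((a : ℤ) + 3) - 3) = q ^ (2 * a + 3) := by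
    rw [show 2 * ((a : ℤ) + 3) - 3 = ((2 * a + 3 : ℕ) : ℤ) by push_cast; ring, zpow_natCast]
  have z7 : q ^ (-2 - 2 * ((a : ℤ) + 3)) = (q ^ (2 * a + 8))⁻¹ := by
    rw [show -2 - 2 * ((a : ℤ) + 3) = -((2 * a + 8 : ℕ) : ℤ) by push_cast; ring, zpow_neg,
      zpow_natCast]
  have z8 : q ^ ((a : ℤ) + 3 - 1) = q ^ (a + 2) := by
    rw [show (a : ℤ) + 3 - 1 = ((a + 2 : ℕ) : ℤ) by push_cast; ring, zpow_natCast]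
  have z9 : (q : ℂ) ^ (4 : ℤ) = q ^ (4 : ℕ) := by
    rw [show (4 : ℤ) = ((4 : ℕ) : ℤ) by norm_num, zpow_natCast]
  have z10 : q ^ (4 * ((a : ℤ) + 3)) = q ^ (4 * a + 12) := by
    rw [show 4 * ((a : ℤ) + 3) = ((4 * a + 12 : ℕ) : ℤ) by push_cast; ring, zpow_natCast]
  have z11 : q ^ (3 + ((a : ℤ) + 3)) = q ^ (a + 6) := by
    rw [show 3 + ((a : ℤ) + 3) = ((a + 6 : ℕ) : ℤ) by push_cast; ring, zpow_natCast]
  have z12 : q ^ (1 + 2 * ((a : ℤ) + 3)) = q ^ (2 * a + 7) := by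
    rw [show 1 + 2 * ((a : ℤ) + 3) = ((2 * a + 7 : ℕ) : ℤ) by push_cast; ring, zpow_natCast]
  have z13 : q ^ (3 + 2 * ((a : ℤ) + 3)) = q ^ (2 * a + 9) := by
    rw [show 3 + 2 * ((a : ℤ) + 3) = ((2 * a + 9 : ℕ) : ℤ) by push_cast; ring, zpow_natCast]
  have z14 : q ^ (1 + 3 * ((a : ℤ) + 3)) = q ^ (3 * a + 10) := by
    rw [show 1 + 3 * ((a : ℤ) + 3) = ((3 * a + 10 : ℕ) : ℤ) by push_cast; ring, zpow_natCast]
  rw [z1, z2, z3, z4, z5, z6, z7, z8, z9, z10, z11, z12, z13, z14]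
  rw [hG0] at main
  have e3 : (1 : ℂ) - q ^ (a + 3) ≠ 0 := ne1 _ (by omega)
  have e4 : (1 : ℂ) - q ^ (2 * a + 3) ≠ 0 := ne1 _ (by omega)
  have hc1 : (q ^ (a + 3) - 1) * ((q : ℂ) ^ (a + 3) - 1)⁻¹ = 1 := mul_inv_cancel₀ e1
  have hcD : ((1 - q ^ (a + 3)) * (1 - q ^ (2 * a + 3))) *
      (((1 : ℂ) - q ^ (a + 3)) * (1 - q ^ (2 * a + 3)))⁻¹ = 1 :=
    mul_inv_cancel₀ (mul_ne_zero e3 e4)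
  linear_combination
    ((1 - q ^ (a + 3)) * (1 - q ^ (2 * a + 3)))⁻¹ * main
    + (-(J (a + 3)) + (q ^ (a + 4))⁻¹ * ((q + q ^ (a + 3)) * (q ^ (2 * a + 6) - q)) *
        (q ^ (a + 3) - 1)⁻¹) * hcD
    + ((q ^ (a + 4))⁻¹ * ((q + q ^ (a + 3)) * (q ^ (2 * a + 6) - q)) *
        ((1 - q ^ (a + 3)) * (1 - q ^ (2 * a + 3)))⁻¹ * (1 - q ^ (2 * a + 3))) * hc1
end

section
/- Define a_{j,0}(m) = â_j(m, 1) and a_{j,1}(m) = 2·(∂â_j/∂q)(m, 1) for j = 0, 1, 2, 3 (these are the zeroth and first Taylor coefficients in ℏ of a_j(m, ℏ) = â_j(m, e^{2ℏ}) at ℏ = 0). Then for all m ∈ ℂ with m ≠ 0: (∑_{j=0}^{3} a_{j,1}(m)) · (m² + m^{−2} − 3) = (2m² − 2m^{−2}) · (∑_{j=0}^{3} j·a_{j,0}(m)). Equivalently, in the abelian branch (S₀^A(u) = 0), the first-order coefficient of the asymptotic expansion of the colored Jones polynomial of the figure-eight knot, S₁^A(u) = −(∑_j a_{j,1}(e^u))/(∑_j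 j·a_{j,0}(e^u)) d u-antiderivative, equals log(1/Δ_{4₁}(e^{2u})), where Δ_{4₁}(t) = t + t^{−1} − 3 is the Alexander polynomial of 4₁; i.e. dS₁^A/du = −(2m² − 2m^{−2})/(m² + m^{−2} − 3) with m = e^u. -/
/-- The coefficients `â_j(m, q)` of the noncommutative A-polynomial
`Â_{4₁}(l̂, m̂²; q) = ∑_{j=0}^{3} â_j(m̂, q) l̂^j` of the figure-eight knot. -/
noncomputable def ahatFigEight : ℕ → ℂ → ℂ → ℂ
  | 0, m, q =>
      m ^ 2 * q ^ 5 * (q - m ^ 2 * q ^ 3) * (q ^ 3 - m ^ 2 * q ^ 3) *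
        (q + m ^ 2 * q ^ 3) * (q - m ^ 4 * q ^ 6) * (q ^ 3 - m ^ 4 * q ^ 6)
  | 1, m, q =>
      -(1 / (m ^ 2 * q ^ 5)) * (q - m ^ 2 * q ^ 3) * (q ^ 2 - m ^ 2 * q ^ 3) *
        (q ^ 2 + m ^ 2 * q ^ 3) * (q - m ^ 4 * q ^ 6) * (q ^ 3 - m ^ 4 * q ^ 6) *
        (q ^ 8 - 2 * m ^ 2 * q ^ 9 + m ^ 2 * q ^ 10 - m ^ 4 * q ^ 9 + m ^ 4 * q ^ 10 -
          m ^ 4 * q ^ 11 + m ^ 6 * q ^ 10 - 2 * m ^ 6 * q ^ 11 + m ^ 8 * q ^ 12)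
  | 2, m, q =>
      (1 / (m ^ 2 * q ^ 4)) * (q - m ^ 2 * q ^ 3) ^ 2 * (q + m ^ 2 * q ^ 3) *
        (q ^ 3 - m ^ 4 * q ^ 6) * (q ^ 5 - m ^ 4 * q ^ 6) *
        (q ^ 4 + m ^ 2 * q ^ 5 - 2 * m ^ 2 * q ^ 6 - m ^ 4 * q ^ 7 + m ^ 4 * q ^ 8 -
          m ^ 4 * q ^ 9 - 2 * m ^ 6 * q ^ 10 + m ^ 6 * q ^ 11 + m ^ 8 * q ^ 12)
  | 3, m, q =>
      m ^ 2 * q ^ 4 * (q - m ^ 2 * q ^ 3) * (-1 + m ^ 2 * q ^ 3) *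
        (q ^ 2 + m ^ 2 * q ^ 3) * (q ^ 3 - m ^ 4 * q ^ 6) * (q ^ 5 - m ^ 4 * q ^ 6)
  | _, _, _ => 0

/-- The zeroth-order Taylor coefficient in `ℏ` of `a_j(m, ℏ) = â_j(m, e^{2ℏ})`
at `ℏ = 0`, namely `a_{j,0}(m) = â_j(m, 1)`. -/
noncomputable def aCoeff0 (j : ℕ) (m : ℂ) : ℂ := ahatFigEight j m 1

/-- The first-order Taylor coefficient in `ℏ` of `a_j(m, ℏ) = â_j(m, e^{2ℏ})`
at `ℏ = 0`, namely `a_{j,1}(m) = 2 (∂â_j/∂q)(m, 1)`. -/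
noncomputable def aCoeff1 (j : ℕ) (m : ℂ) : ℂ :=
  2 * deriv (fun q => ahatFigEight j m q) 1

lemma figEight_hasDerivAt_0 (m : ℂ) :
    HasDerivAt (fun q : ℂ =>
      m ^ 2 * q ^ 5 * (q - m ^ 2 * q ^ 3) * (q ^ 3 - m ^ 2 * q ^ 3) *
        (q + m ^ 2 * q ^ 3) * (q - m ^ 4 * q ^ 6) * (q ^ 3 - m ^ 4 * q ^ 6))
      (14*m^2 - 14*m^4 - 54*m^6 + 54*m^8 + 66*m^10 - 66*m^12 - 26*m^14 + 26*m^16) 1 := by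
  have h := (((((((hasDerivAt_pow 5 (1:ℂ)).const_mul (m^2)).mul ((hasDerivAt_id' (1:ℂ)).sub ((hasDerivAt_pow 3 (1:ℂ)).const_mul (m^2)))).mul ((hasDerivAt_pow 3 (1:ℂ)).sub ((hasDerivAt_pow 3 (1:ℂ)).const_mul (m^2)))).mul ((hasDerivAt_id' (1:ℂ)).add ((hasDerivAt_pow 3 (1:ℂ)).const_mul (m^2)))).mul ((hasDerivAt_id' (1:ℂ)).sub ((hasDerivAt_pow 6 (1:ℂ)).const_mul (m^4)))).mul ((hasDerivAt_pow 3 (1:ℂ)).sub ((hasDerivAt_pow 6 (1:ℂ)).const_mul (m^4))))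
  refine h.congr_deriv ?_; symm
  simp only [Pi.mul_apply, Pi.add_apply, Pi.sub_apply, Pi.neg_apply, Pi.div_apply, Pi.pow_apply]
  push_cast
  ring

lemma figEight_hasDerivAt_1 (m : ℂ) (hm : m ≠ 0) :
    HasDerivAt (fun q : ℂ =>
      -(1 / (m ^ 2 * q ^ 5)) * (q - m ^ 2 * q ^ 3) * (q ^ 2 - m ^ 2 * q ^ 3) *
        (q ^ 2 + m ^ 2 * q ^ 3) * (q - m ^ 4 * q ^ 6) * (q ^ 3 - m ^ 4 * q ^ 6) *
        (q ^ 8 - 2 * m ^ 2 * q ^ 9 + m ^ 2 * q ^ 10 - m ^ 4 * q ^ 9 + m ^ 4 * q ^ 10 -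
          m ^ 4 * q ^ 11 + m ^ 6 * q ^ 10 - 2 * m ^ 6 * q ^ 11 + m ^ 8 * q ^ 12))
      ((-12 + 26*m^2 + 46*m^4 - 98*m^6 - 90*m^8 + 136*m^10 + 144*m^12 - 110*m^14 - 142*m^16 + 74*m^18 + 54*m^20 - 28*m^22)/m^2) 1 := by
  have hne5 : m ^ 2 * (1:ℂ) ^ 5 ≠ 0 := by simpa using pow_ne_zero 2 hm
  have hinv : HasDerivAt (fun q : ℂ => 1 / (m ^ 2 * q ^ 5)) (-(5 / m ^ 2)) 1 := by
    have h := (hasDerivAt_const (1:ℂ) (1:ℂ)).div ((hasDerivAt_pow 5 (1:ℂ)).const_mul (m^2)) hne5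
    refine h.congr_deriv ?_; symm
    field_simp
    ring
  have hninv5 := hinv.neg
  have h := ((((((hninv5.mul ((hasDerivAt_id' (1:ℂ)).sub ((hasDerivAt_pow 3 (1:ℂ)).const_mul (m^2)))).mul ((hasDerivAt_pow 2 (1:ℂ)).sub ((hasDerivAt_pow 3 (1:ℂ)).const_mul (m^2)))).mul ((hasDerivAt_pow 2 (1:ℂ)).add ((hasDerivAt_pow 3 (1:ℂ)).const_mul (m^2)))).mul ((hasDerivAt_id' (1:ℂ)).sub ((hasDerivAt_pow 6 (1:ℂ)).const_mul (m^4)))).mul ((hasDerivAt_pow 3 (1:ℂ)).sub ((hasDerivAt_pow 6 (1:ℂ)).const_mul (m^4)))).mul (((((((((hasDerivAt_pow 8 (1:ℂ)).sub ((hasDerivAt_pow 9 (1:ℂ)).const_mul (2*m^2))).add ((hasDerivAt_pow 10 (1:ℂ)).const_mul (m^2))).sub ((hasDerivAt_pow 9 (1:ℂ)).const_mul (m^4))).add ((hasDerivAt_pow 10 (1:ℂ)).const_mul (m^4))).sub ((hasDerivAt_pow 11 (1:ℂ)).const_mul (m^4))).add ((hasDerivAt_pow 10 (1:ℂ)).const_mul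 (m^6))).sub ((hasDerivAt_pow 11 (1:ℂ)).const_mul (2*m^6))).add ((hasDerivAt_pow 12 (1:ℂ)).const_mul (m^8))))
  refine h.congr_deriv ?_; symm
  simp only [Pi.mul_apply, Pi.add_apply, Pi.sub_apply, Pi.neg_apply, Pi.div_apply, Pi.pow_apply]
  field_simp
  ring

lemma figEight_hasDerivAt_2 (m : ℂ) (hm : m ≠ 0) :
    HasDerivAt (fun q : ℂ =>
      (1 / (m ^ 2 * q ^ 4)) * (q - m ^ 2 * q ^ 3) ^ 2 * (q + m ^ 2 * q ^ 3) *
        (q ^ 3 - m ^ 4 * q ^ 6) * (q ^ 5 - m ^ 4 * q ^ 6) *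
        (q ^ 4 + m ^ 2 * q ^ 5 - 2 * m ^ 2 * q ^ 6 - m ^ 4 * q ^ 7 + m ^ 4 * q ^ 8 -
          m ^ 4 * q ^ 9 - 2 * m ^ 6 * q ^ 10 + m ^ 6 * q ^ 11 + m ^ 8 * q ^ 12))
      ((11 - 27*m^2 - 40*m^4 + 98*m^6 + 83*m^8 - 137*m^10 - 143*m^12 + 117*m^14 + 142*m^16 - 80*m^18 - 53*m^20 + 29*m^22)/m^2) 1 := by
  have hne4 : m ^ 2 * (1:ℂ) ^ 4 ≠ 0 := by simpa using pow_ne_zero 2 hm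
  have hinv4 : HasDerivAt (fun q : ℂ => 1 / (m ^ 2 * q ^ 4)) (-(4 / m ^ 2)) 1 := by
    have h := (hasDerivAt_const (1:ℂ) (1:ℂ)).div ((hasDerivAt_pow 4 (1:ℂ)).const_mul (m^2)) hne4
    refine h.congr_deriv ?_; symm
    field_simp
    ring
  have hG := (((((((hasDerivAt_id' (1:ℂ)).sub ((hasDerivAt_pow 3 (1:ℂ)).const_mul (m^2))).pow 2).mul ((hasDerivAt_id' (1:ℂ)).add ((hasDerivAt_pow 3 (1:ℂ)).const_mul (m^2)))).mul ((hasDerivAt_pow 3 (1:ℂ)).sub ((hasDerivAt_pow 6 (1:ℂ)).const_mul (m^4)))).mul ((hasDerivAt_pow 5 (1:ℂ)).sub ((hasDerivAt_pow 6 (1:ℂ)).const_mul (m^4)))).mul (((((((((hasDerivAt_pow 4 (1:ℂ)).add ((hasDerivAt_pow 5 (1:ℂ)).const_mul (m^2))).sub ((hasDerivAt_pow 6 (1:ℂ)).const_mul (2*m^2))).sub ((hasDerivAt_pow 7 (1:ℂ)).const_mul (m^4))).add ((hasDerivAt_pow 8 (1:ℂ)).const_mul (m^4))).sub ((hasDerivAt_pow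 9 (1:ℂ)).const_mul (m^4))).sub ((hasDerivAt_pow 10 (1:ℂ)).const_mul (2*m^6))).add ((hasDerivAt_pow 11 (1:ℂ)).const_mul (m^6))).add ((hasDerivAt_pow 12 (1:ℂ)).const_mul (m^8))))
  have hclean := hinv4.mul hG
  have hmain : HasDerivAt (fun q : ℂ => (1 / (m ^ 2 * q ^ 4)) * ((q - m ^ 2 * q ^ 3) ^ 2 * (q + m ^ 2 * q ^ 3) *
        (q ^ 3 - m ^ 4 * q ^ 6) * (q ^ 5 - m ^ 4 * q ^ 6) *
        (q ^ 4 + m ^ 2 * q ^ 5 - 2 * m ^ 2 * q ^ 6 - m ^ 4 * q ^ 7 + m ^ 4 * q ^ 8 -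
          m ^ 4 * q ^ 9 - 2 * m ^ 6 * q ^ 10 + m ^ 6 * q ^ 11 + m ^ 8 * q ^ 12)))
      ((11 - 27*m^2 - 40*m^4 + 98*m^6 + 83*m^8 - 137*m^10 - 143*m^12 + 117*m^14 + 142*m^16 - 80*m^18 - 53*m^20 + 29*m^22)/m^2) 1 := by
    refine hclean.congr_deriv ?_; symm
    simp only [Pi.mul_apply, Pi.add_apply, Pi.sub_apply, Pi.neg_apply, Pi.div_apply, Pi.pow_apply]
    field_simp
    ring
  exact hmain.congr_of_eventuallyEq (Filter.Eventually.of_forall (fun y => by ring))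

lemma figEight_hasDerivAt_3 (m : ℂ) :
    HasDerivAt (fun q : ℂ =>
      m ^ 2 * q ^ 4 * (q - m ^ 2 * q ^ 3) * (-1 + m ^ 2 * q ^ 3) *
        (q ^ 2 + m ^ 2 * q ^ 3) * (q ^ 3 - m ^ 4 * q ^ 6) * (q ^ 5 - m ^ 4 * q ^ 6))
      (-15*m^2 + 19*m^4 + 51*m^6 - 63*m^8 - 57*m^10 + 69*m^12 + 21*m^14 - 25*m^16) 1 := by
  have h := (((((((hasDerivAt_pow 4 (1:ℂ)).const_mul (m^2)).mul ((hasDerivAt_id' (1:ℂ)).sub ((hasDerivAt_pow 3 (1:ℂ)).const_mul (m^2)))).mul ((hasDerivAt_const (1:ℂ) (-1:ℂ)).add ((hasDerivAt_pow 3 (1:ℂ)).const_mul (m^2)))).mul ((hasDerivAt_pow 2 (1:ℂ)).add ((hasDerivAt_pow 3 (1:ℂ)).const_mul (m^2)))).mul ((hasDerivAt_pow 3 (1:ℂ)).sub ((hasDerivAt_pow 6 (1:ℂ)).const_mul (m^4)))).mul ((hasDerivAt_pow 5 (1:ℂ)).sub ((hasDerivAt_pow 6 (1:ℂ)).const_mul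 (m^4))))
  refine h.congr_deriv ?_; symm
  simp only [Pi.mul_apply, Pi.add_apply, Pi.sub_apply, Pi.neg_apply, Pi.div_apply, Pi.pow_apply]
  push_cast
  ring


/-- First-order equation of the quantization hierarchy for the figure-eight
knot in the abelian branch: for `m ≠ 0`,
`(∑_j a_{j,1}(m)) (m² + m⁻² - 3) = (2m² - 2m⁻²) (∑_j j a_{j,0}(m))`.
Equivalently, the first coefficient of the abelian-branch asymptotic expansion
of the colored Jones polynomial of `4₁` satisfies
`dS₁ᴬ/du = -(2m² - 2m⁻²)/(m² + m⁻² - 3)` with `m = e^u`, i.e.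
`S₁ᴬ(u) = log (1/Δ_{4₁}(e^{2u}))` with `Δ_{4₁}(t) = t + t⁻¹ - 3` the Alexander
polynomial of `4₁`. -/
theorem figure_eight_abelian_S1 (m : ℂ) (hm : m ≠ 0) :
    (∑ j ∈ Finset.range 4, aCoeff1 j m) * (m ^ 2 + m ^ (-2 : ℤ) - 3) =
      (2 * m ^ 2 - 2 * m ^ (-2 : ℤ)) *
        (∑ j ∈ Finset.range 4, (j : ℂ) * aCoeff0 j m) := by
  have h0 := (figEight_hasDerivAt_0 m).deriv
  have h1 := (figEight_hasDerivAt_1 m hm).deriv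
  have h2 := (figEight_hasDerivAt_2 m hm).deriv
  have h3 := (figEight_hasDerivAt_3 m).deriv
  have hm2 : m ^ (-2 : ℤ) = (m ^ 2)⁻¹ := by
    rw [zpow_neg]; norm_cast
  simp only [Finset.sum_range_succ, Finset.sum_range_zero, aCoeff1, aCoeff0, ahatFigEight]
  rw [h0, h1, h2, h3, hm2]
  have hm' : m ^ 2 ≠ 0 := pow_ne_zero 2 hm
  field_simp
  ring
end

section
/- Define a_{j,0}(m) = â_j(m, 1), a_{j,1}(m) = 2·(∂â_j/∂q)(m, 1), and a_{j,2}(m) = 2·((∂â_j/∂q)(m, 1) + (∂²â_j/∂q²)(m, 1)) for j = 0, 1, 2, 3 (these are the Taylor coefficients up to order 2 in ℏ of a_j(m, ℏ) = â_j(m, e^{2ℏ}) at ℏ = 0). Let s₁(m) = −(2m² − 2m^{−2})/(m² + m^{−2} − 3) and t₁(m) = m·(ds₁/dm)(m). Then for all m ∈ ℂ with m ≠ 0 and m² + m^{−2} − 3 ≠ 0: ∑_{j=0}^{3} [ a_{j,1}(m)·s₁(m)·j + a_{j,2}(m) + a_{j,0}(m)·( (1/2)·s₁(m)²·j² + (1/2)·t₁(m)·j²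 ) ] = 0. Equivalently, in the abelian branch of the asymptotic expansion of the colored Jones polynomial of the figure-eight knot, the second coefficient S₂^A(u) is constant (its derivative vanishes identically). -/
set_option maxHeartbeats 4000000


/-- `a_{j,2}(m) = 2 ((∂â_j/∂q)(m, 1) + (∂²â_j/∂q²)(m, 1))`, the second Taylor
coefficient in `ℏ` of `a_j(m, ℏ) = â_j(m, e^{2ℏ})` at `ℏ = 0`. -/
noncomputable def aCoeff2 (j : ℕ) (m : ℂ) : ℂ :=
  2 * (deriv (fun q => ahatFigEight j m q) 1 +
    deriv (deriv (fun q => ahatFigEight j m q)) 1)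

/-- `s₁(m) = -(2m² - 2m⁻²)/(m² + m⁻² - 3)`, the derivative `S₁ᴬ'(u)` of the
first abelian-branch expansion coefficient, written in the variable `m = e^u`. -/
noncomputable def s1FigEight (m : ℂ) : ℂ :=
  -(2 * m ^ 2 - 2 * m ^ (-2 : ℤ)) / (m ^ 2 + m ^ (-2 : ℤ) - 3)

/-- `t₁(m) = m · s₁'(m)`, i.e. `S₁ᴬ''(u)` in the variable `m = e^u`. -/
noncomputable def t1FigEight (m : ℂ) : ℂ := m * deriv s1FigEight m


/-- Sparse polynomial given by a list of (coefficient, exponent) pairs. -/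
noncomputable def pfun (L : List (ℂ × ℕ)) (q : ℂ) : ℂ := (L.map fun p => p.1 * q ^ p.2).sum

/-- Formal derivative of the list representation. -/
noncomputable def Dl (L : List (ℂ × ℕ)) : List (ℂ × ℕ) :=
  L.map fun p => (p.1 * (p.2 : ℂ), p.2 - 1)

lemma pfun_hasDerivAt (L : List (ℂ × ℕ)) (q : ℂ) :
    HasDerivAt (pfun L) (pfun (Dl L) q) q := by
  induction L with
  | nil =>
    have e : pfun [] = fun _ => (0 : ℂ) := funext fun x => by simp [pfun]
    simpa [e, pfun, Dl] using hasDerivAt_const q (0 : ℂ)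
  | cons p L ih =>
    have h := ((hasDerivAt_pow p.2 q).const_mul p.1).add ih
    have e : pfun (p :: L) = (fun y => p.1 * y ^ p.2) + pfun L := funext fun x => by simp [pfun]
    rw [e]
    simpa [pfun, Dl, mul_assoc] using h

lemma deriv_pfun (L : List (ℂ × ℕ)) : deriv (pfun L) = pfun (Dl L) :=
  funext fun q => (pfun_hasDerivAt L q).deriv

noncomputable def LL0 (m : ℂ) : List (ℂ × ℕ) :=
  [((1) * m ^ 2, 14),
    ((-1) * m ^ 4, 14),
    ((-1) * m ^ 6, 17),
    ((1) * m ^ 8, 17),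
    ((-1) * m ^ 6, 18),
    ((1) * m ^ 8, 18),
    ((-1) * m ^ 6, 19),
    ((1) * m ^ 8, 19),
    ((1) * m ^ 10, 21),
    ((-1) * m ^ 12, 21),
    ((1) * m ^ 10, 22),
    ((-1) * m ^ 12, 22),
    ((1) * m ^ 10, 23),
    ((-1) * m ^ 12, 23),
    ((-1) * m ^ 14, 26),
    ((1) * m ^ 16, 26)]

noncomputable def LL1 (m : ℂ) : List (ℂ × ℕ) :=
  [((-1) / m ^ 2, 12),
    ((2), 13),
    ((1) * m ^ 2, 13),
    ((-1) * m ^ 4, 14),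
    ((-1) * m ^ 4, 15),
    ((-1) * m ^ 6, 15),
    ((1) * m ^ 2, 16),
    ((-1) * m ^ 4, 16),
    ((1) * m ^ 8, 16),
    ((1) * m ^ 2, 17),
    ((-1) * m ^ 4, 17),
    ((-1) * m ^ 6, 17),
    ((-2) * m ^ 4, 18),
    ((-1) * m ^ 6, 18),
    ((1) * m ^ 8, 18),
    ((1) * m ^ 10, 18),
    ((-1) * m ^ 6, 19),
    ((1) * m ^ 8, 19),
    ((1) * m ^ 10, 19),
    ((-1) * m ^ 12, 19),
    ((2) * m ^ 8, 20),
    ((2) * m ^ 10, 20),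
    ((-1) * m ^ 6, 21),
    ((1) * m ^ 8, 21),
    ((1) * m ^ 10, 21),
    ((-1) * m ^ 12, 21),
    ((1) * m ^ 8, 22),
    ((1) * m ^ 10, 22),
    ((-1) * m ^ 12, 22),
    ((-2) * m ^ 14, 22),
    ((-1) * m ^ 12, 23),
    ((-1) * m ^ 14, 23),
    ((1) * m ^ 16, 23),
    ((1) * m ^ 10, 24),
    ((-1) * m ^ 14, 24),
    ((1) * m ^ 16, 24),
    ((-1) * m ^ 12, 25),
    ((-1) * m ^ 14, 25),
    ((-1) * m ^ 14, 26),
    ((1) * m ^ 16, 27),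
    ((2) * m ^ 18, 27),
    ((-1) * m ^ 20, 28)]

noncomputable def LL2 (m : ℂ) : List (ℂ × ℕ) :=
  [((1) / m ^ 2, 11),
    ((1), 12),
    ((-1) * m ^ 2, 12),
    ((-3), 13),
    ((-1) * m ^ 4, 13),
    ((-3) * m ^ 2, 14),
    ((3) * m ^ 4, 14),
    ((2) * m ^ 2, 15),
    ((-1) * m ^ 4, 15),
    ((3) * m ^ 6, 15),
    ((-1) * m ^ 2, 16),
    ((3) * m ^ 4, 16),
    ((-2) * m ^ 6, 16),
    ((1) * m ^ 8, 16),
    ((3) * m ^ 6, 17),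
    ((-3) * m ^ 8, 17),
    ((2) * m ^ 4, 18),
    ((-2) * m ^ 10, 18),
    ((1) * m ^ 6, 19),
    ((-2) * m ^ 8, 19),
    ((-1) * m ^ 8, 20),
    ((-1) * m ^ 10, 20),
    ((-2) * m ^ 10, 21),
    ((1) * m ^ 12, 21),
    ((-2) * m ^ 8, 22),
    ((2) * m ^ 14, 22),
    ((-3) * m ^ 10, 23),
    ((3) * m ^ 12, 23),
    ((1) * m ^ 10, 24),
    ((-2) * m ^ 12, 24),
    ((3) * m ^ 14, 24),
    ((-1) * m ^ 16, 24),
    ((3) * m ^ 12, 25),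
    ((-1) * m ^ 14, 25),
    ((2) * m ^ 16, 25),
    ((3) * m ^ 14, 26),
    ((-3) * m ^ 16, 26),
    ((-1) * m ^ 14, 27),
    ((-3) * m ^ 18, 27),
    ((-1) * m ^ 16, 28),
    ((1) * m ^ 18, 28),
    ((1) * m ^ 20, 29)]

noncomputable def LL3 (m : ℂ) : List (ℂ × ℕ) :=
  [((-1) * m ^ 2, 15),
    ((-1) * m ^ 4, 16),
    ((1) * m ^ 6, 16),
    ((1) * m ^ 4, 17),
    ((1) * m ^ 8, 17),
    ((1) * m ^ 4, 18),
    ((2) * m ^ 6, 18),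
    ((-1) * m ^ 8, 18),
    ((1) * m ^ 6, 19),
    ((-2) * m ^ 10, 19),
    ((-1) * m ^ 6, 20),
    ((-1) * m ^ 8, 20),
    ((-1) * m ^ 10, 20),
    ((-1) * m ^ 12, 20),
    ((-2) * m ^ 8, 21),
    ((1) * m ^ 12, 21),
    ((-1) * m ^ 10, 22),
    ((2) * m ^ 12, 22),
    ((1) * m ^ 14, 22),
    ((1) * m ^ 10, 23),
    ((1) * m ^ 14, 23),
    ((1) * m ^ 12, 24),
    ((-1) * m ^ 14, 24),
    ((-1) * m ^ 16, 25)]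

lemma hfun0 (m : ℂ) : (fun q => ahatFigEight 0 m q) = pfun (LL0 m) := by
  funext q
  simp only [ahatFigEight, pfun, LL0, List.map_cons, List.map_nil, List.sum_cons, List.sum_nil]
  ring

lemma hfun1 (m : ℂ) (hm : m ≠ 0) : (fun q => ahatFigEight 1 m q) = pfun (LL1 m) := by
  funext q
  rcases eq_or_ne q 0 with rfl | hq
  · norm_num [ahatFigEight, pfun, LL1]
  · simp only [ahatFigEight, pfun, LL1, List.map_cons, List.map_nil, List.sum_cons, List.sum_nil]
    field_simp
    ring

lemma hfun2 (m : ℂ) (hm : m ≠ 0) : (fun q => ahatFigEight 2 m q) = pfun (LL2 m) := by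
  funext q
  rcases eq_or_ne q 0 with rfl | hq
  · norm_num [ahatFigEight, pfun, LL2]
  · simp only [ahatFigEight, pfun, LL2, List.map_cons, List.map_nil, List.sum_cons, List.sum_nil]
    field_simp
    ring

lemma hfun3 (m : ℂ) : (fun q => ahatFigEight 3 m q) = pfun (LL3 m) := by
  funext q
  simp only [ahatFigEight, pfun, LL3, List.map_cons, List.map_nil, List.sum_cons, List.sum_nil]
  ring


/-- Second-order equation of the quantization hierarchy for the figure-eight
knot in the abelian branch: for `m ≠ 0` with `m² + m⁻² - 3 ≠ 0`,
`∑_j [a_{j,1}(m) s₁(m) j + a_{j,2}(m) + a_{j,0}(m) ((1/2) s₁(m)² j² + (1/2) t₁(m) j²)] = 0`.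
Equivalently, the second coefficient `S₂ᴬ(u)` of the abelian-branch asymptotic
expansion of the colored Jones polynomial of `4₁` is constant: its derivative
vanishes identically. -/
theorem figure_eight_abelian_S2_constant (m : ℂ) (hm : m ≠ 0)
    (hΔ : m ^ 2 + m ^ (-2 : ℤ) - 3 ≠ 0) :
    ∑ j ∈ Finset.range 4,
        (aCoeff1 j m * s1FigEight m * (j : ℂ) + aCoeff2 j m +
          aCoeff0 j m * ((1 / 2) * s1FigEight m ^ 2 * (j : ℂ) ^ 2 +
            (1 / 2) * t1FigEight m * (j : ℂ) ^ 2)) = 0 := by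
  
  classical
  have h0 := hfun0 m
  have h1 := hfun1 m hm
  have h2 := hfun2 m hm
  have h3 := hfun3 m
  have e2 : m ^ (-2 : ℤ) = (m ^ 2)⁻¹ := by
    rw [zpow_neg]; norm_cast
  have hq2 : m ^ 2 ≠ 0 := pow_ne_zero _ hm
  have hD : m ^ 4 - 3 * m ^ 2 + 1 ≠ 0 := by
    intro h
    apply hΔ
    rw [e2]
    field_simp
    linear_combination h
  have hΔ' : m ^ 2 + (m ^ 2)⁻¹ - 3 ≠ 0 := by rw [← e2]; exact hΔ
  -- derivative of s₁
  have hnum : HasDerivAt (fun x : ℂ => -(2 * x ^ 2 - 2 * x ^ (-2 : ℤ)))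
      (-(2 * (2 * m) - 2 * ((-2 : ℤ) * m ^ (-3 : ℤ)))) m := by
    have hp : HasDerivAt (fun x : ℂ => x ^ 2) (2 * m) m := by
      simpa using hasDerivAt_pow 2 m
    have hz : HasDerivAt (fun x : ℂ => x ^ (-2 : ℤ)) ((-2 : ℤ) * m ^ (-3 : ℤ)) m := by
      simpa using hasDerivAt_zpow (-2) m (Or.inl hm)
    exact ((hp.const_mul 2).sub (hz.const_mul 2)).neg
  have hden : HasDerivAt (fun x : ℂ => x ^ 2 + x ^ (-2 : ℤ) - 3)
      (2 * m + (-2 : ℤ) * m ^ (-3 : ℤ)) m := by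
    have hp : HasDerivAt (fun x : ℂ => x ^ 2) (2 * m) m := by
      simpa using hasDerivAt_pow 2 m
    have hz : HasDerivAt (fun x : ℂ => x ^ (-2 : ℤ)) ((-2 : ℤ) * m ^ (-3 : ℤ)) m := by
      simpa using hasDerivAt_zpow (-2) m (Or.inl hm)
    exact (hp.add hz).sub_const 3
  have hs1 : HasDerivAt s1FigEight
      ((-(2 * (2 * m) - 2 * ((-2 : ℤ) * m ^ (-3 : ℤ))) * (m ^ 2 + m ^ (-2 : ℤ) - 3) -
        -(2 * m ^ 2 - 2 * m ^ (-2 : ℤ)) * (2 * m + (-2 : ℤ) * m ^ (-3 : ℤ))) /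
        (m ^ 2 + m ^ (-2 : ℤ) - 3) ^ 2) m :=
    hnum.div hden hΔ
  have ht1 : t1FigEight m =
      m * ((-(2 * (2 * m) - 2 * ((-2 : ℤ) * m ^ (-3 : ℤ))) * (m ^ 2 + m ^ (-2 : ℤ) - 3) -
        -(2 * m ^ 2 - 2 * m ^ (-2 : ℤ)) * (2 * m + (-2 : ℤ) * m ^ (-3 : ℤ))) /
        (m ^ 2 + m ^ (-2 : ℤ) - 3) ^ 2) := by
    rw [t1FigEight, hs1.deriv]
  have e3 : m ^ (-3 : ℤ) = (m ^ 3)⁻¹ := by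
    rw [zpow_neg]; norm_cast
  have c00 : aCoeff0 0 m = pfun (LL0 m) 1 := congrFun h0 1
  have c01 : aCoeff0 1 m = pfun (LL1 m) 1 := congrFun h1 1
  have c02 : aCoeff0 2 m = pfun (LL2 m) 1 := congrFun h2 1
  have c03 : aCoeff0 3 m = pfun (LL3 m) 1 := congrFun h3 1
  have c10 : aCoeff1 0 m = 2 * pfun (Dl (LL0 m)) 1 := by rw [aCoeff1, h0, deriv_pfun]
  have c11 : aCoeff1 1 m = 2 * pfun (Dl (LL1 m)) 1 := by rw [aCoeff1, h1, deriv_pfun]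
  have c12 : aCoeff1 2 m = 2 * pfun (Dl (LL2 m)) 1 := by rw [aCoeff1, h2, deriv_pfun]
  have c13 : aCoeff1 3 m = 2 * pfun (Dl (LL3 m)) 1 := by rw [aCoeff1, h3, deriv_pfun]
  have c20 : aCoeff2 0 m = 2 * (pfun (Dl (LL0 m)) 1 + pfun (Dl (Dl (LL0 m))) 1) := by
    rw [aCoeff2, h0, deriv_pfun, deriv_pfun]
  have c21 : aCoeff2 1 m = 2 * (pfun (Dl (LL1 m)) 1 + pfun (Dl (Dl (LL1 m))) 1) := by
    rw [aCoeff2, h1, deriv_pfun, deriv_pfun]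
  have c22 : aCoeff2 2 m = 2 * (pfun (Dl (LL2 m)) 1 + pfun (Dl (Dl (LL2 m))) 1) := by
    rw [aCoeff2, h2, deriv_pfun, deriv_pfun]
  have c23 : aCoeff2 3 m = 2 * (pfun (Dl (LL3 m)) 1 + pfun (Dl (Dl (LL3 m))) 1) := by
    rw [aCoeff2, h3, deriv_pfun, deriv_pfun]
  have hg : m ^ 2 + (m ^ 2)⁻¹ - 3 = (m ^ 4 - 3 * m ^ 2 + 1) / m ^ 2 := by
    field_simp; ring
  have hs1v : s1FigEight m = (2 - 2 * m ^ 4) / (m ^ 4 - 3 * m ^ 2 + 1) := by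
    rw [s1FigEight, e2, hg]
    field_simp
    ring
  have ht1v : t1FigEight m =
      ((2 * m ^ 4 - 2) ^ 2 - (4 * m ^ 4 + 4) * (m ^ 4 - 3 * m ^ 2 + 1)) /
        (m ^ 4 - 3 * m ^ 2 + 1) ^ 2 := by
    have hQ : (m ^ 2 + (m ^ 2)⁻¹ - 3) ^ 2 ≠ 0 := pow_ne_zero _ hΔ'
    rw [ht1, e2, e3, ← mul_div_assoc, div_eq_div_iff hQ (pow_ne_zero 2 hD), hg]
    push_cast
    field_simp
    ring
  rw [Finset.sum_range_succ, Finset.sum_range_succ, Finset.sum_range_succ,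
    Finset.sum_range_succ, Finset.sum_range_zero,
    c00, c01, c02, c03, c10, c11, c12, c13, c20, c21, c22, c23, ht1v, hs1v]
  simp only [pfun, Dl, LL0, LL1, LL2, LL3, List.map_cons, List.map_nil,
    List.sum_cons, List.sum_nil,
    Nat.cast_ofNat, Nat.cast_zero, Nat.cast_one, Nat.cast_succ]
  push_cast
  have hD2 : m ^ 2 * (m ^ 2 - 3) + 1 ≠ 0 := by
    intro h; apply hD; linear_combination h
  field_simp [hm, hD, hD2]
  ring
end
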